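/- Define τ_n(x) = det(h_{j−2i+n+1}(x))_{1≤i,j≤n}, where h_k(x) is given by exp(xλ+λ³/3) = Σ h_k(x)λ^k and h_k = 0 for k < 0. Then τ_n(x) has degree exactly n(n+1)/2 and leading coefficient 1/Π_{k=1}^{n}(2k−1)!!. -/

import Mathlib

open Polynomial PowerSeries Finset


lemma coeff_prod_deg {ι : Type*} (s : Finset ι) (f : ι → Polynomial ℚ) (d : ι → ℕ)
    (h : ∀ i ∈ s, (f i).natDegree ≤ d i) :
    (∏ i ∈ s, f i).coeff (∑ i ∈ s, d i) = ∏ i ∈ s, (f i).coeff (d i) := by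
  induction s using Finset.cons_induction with
  | empty => simp
  | cons a s ha ih =>
    rw [Finset.prod_cons, Finset.sum_cons,
      Polynomial.coeff_mul_add_eq_of_natDegree_le (h a (Finset.mem_cons_self a s))
        ((Polynomial.natDegree_prod_le s f).trans
          (Finset.sum_le_sum fun i hi => h i (Finset.mem_cons_of_mem hi))),
      ih fun i hi => h i (Finset.mem_cons_of_mem hi), Finset.prod_cons]

lemma key_fact (β : ℤ) (c : ℕ) : ∀ B : ℕ, c ≤ B → 0 ≤ β + B →
    ((((β + B).toNat).factorial : ℚ))⁻¹ * ∏ m ∈ Finset.Icc (c + 1) B, ((β : ℚ) + m) =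
    if 0 ≤ β + c then ((((β + c).toNat).factorial : ℚ))⁻¹ else 0 := by
  refine Nat.le_induction ?_ ?_
  · intro hc
    rw [Finset.Icc_eq_empty (by omega), Finset.prod_empty, mul_one, if_pos hc]
  · intro B hB ih hc
    rcases lt_or_ge (β + B) 0 with hneg | hpos
    · have hmem : B + 1 ∈ Finset.Icc (c + 1) (B + 1) := Finset.mem_Icc.mpr ⟨by omega, le_rfl⟩
      have h0 : ((β : ℚ) + ((B + 1 : ℕ) : ℚ)) = 0 := by
        have h' : β + ((B : ℤ) + 1) = 0 := by omega
        push_cast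
        exact_mod_cast congrArg (fun x : ℤ => (x : ℚ)) h'
      rw [Finset.prod_eq_zero hmem h0, mul_zero, if_neg (by omega)]
    · have hins : Finset.Icc (c + 1) (B + 1) = insert (B + 1) (Finset.Icc (c + 1) B) := by
        ext x; simp only [Finset.mem_Icc, Finset.mem_insert]; omega
      have hnm : B + 1 ∉ Finset.Icc (c + 1) B := by simp [Finset.mem_Icc]
      rw [hins, Finset.prod_insert hnm]
      have htn : (β + (B + 1 : ℕ)).toNat = (β + B).toNat + 1 := by push_cast; omega
      have h' : (((β + B).toNat : ℚ)) = (β : ℚ) + (B : ℚ) := by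
        exact_mod_cast congrArg (fun x : ℤ => (x : ℚ)) (Int.toNat_of_nonneg hpos)
      have hval : ((β : ℚ) + ((B + 1 : ℕ) : ℚ)) = (((β + B).toNat : ℚ) + 1) := by
        push_cast; linarith [h']
      rw [htn, hval, Nat.factorial_succ, ← ih hpos]
      have hfac : ((((β + B).toNat).factorial : ℚ)) ≠ 0 := by
        exact_mod_cast Nat.factorial_ne_zero _
      have hne : (((β + B).toNat : ℚ) + 1) ≠ 0 := by positivity
      push_cast
      field_simp

lemma prod_two_mul_succ (m : ℕ) :
    ∏ t ∈ Finset.range m, ((2:ℚ) * ((t:ℚ)+1)) = 2^m * (m.factorial : ℚ) := by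
  rw [Finset.prod_mul_distrib, Finset.prod_const, Finset.card_range]
  congr 1
  exact_mod_cast congrArg (fun x : ℕ => (x : ℚ)) (Finset.prod_range_add_one_eq_factorial m)

lemma dfac_inv (k : ℕ) : (((2*k+1).factorial : ℚ))⁻¹ * ((2:ℚ)^k * (k.factorial : ℚ)) =
    (((2*k+1).doubleFactorial : ℕ) : ℚ)⁻¹ := by
  have h : (2*k+1).factorial = (2*k+1).doubleFactorial * (2^k * k.factorial) := by
    have := Nat.factorial_eq_mul_doubleFactorial (2*k)
    rw [this, Nat.doubleFactorial_two_mul]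
  rw [h]
  have h1 : ((2*k+1).doubleFactorial : ℚ) ≠ 0 := by
    exact_mod_cast (Nat.doubleFactorial_pos _).ne'
  have h2 : ((2:ℚ)^k * (k.factorial : ℚ)) ≠ 0 := by positivity
  push_cast
  field_simp

lemma detC (n : ℕ) :
    Matrix.det (Matrix.of fun i j : Fin n =>
      if (0:ℤ) ≤ ((j : ℕ) + 1 : ℤ) - 2 * ((i : ℕ) + 1) + n + 1
        then (((((j : ℕ) + 1 : ℤ) - 2 * ((i : ℕ) + 1) + n + 1).toNat.factorial : ℚ))⁻¹
        else 0) =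
    (∏ k ∈ Finset.range n, (((2*k+1).doubleFactorial : ℕ) : ℚ))⁻¹ := by
  set Q : Fin n → ℚ[X] := fun j => ∏ m ∈ Finset.Icc ((j:ℕ)+2) n, (Polynomial.X + Polynomial.C (m:ℚ)) with hQ
  have hQmonic : ∀ j, (Q j).Monic := fun j => monic_prod_of_monic _ _ fun m _ => monic_X_add_C _
  have hQdeg : ∀ j : Fin n, (Q j).natDegree = n - 1 - (j:ℕ) := by
    intro j
    rw [hQ, Polynomial.natDegree_prod_of_monic _ _ fun m _ => monic_X_add_C _]
    simp only [natDegree_X_add_C, Finset.sum_const, Nat.card_Icc, smul_eq_mul, mul_one]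
    omega
  set v : Fin n → ℚ := fun i => (((n:ℤ) - 2*(i:ℕ) - 1 : ℤ) : ℚ) with hv
  have hentry : ∀ i j : Fin n,
      (if (0:ℤ) ≤ ((j : ℕ) + 1 : ℤ) - 2 * ((i : ℕ) + 1) + n + 1
        then (((((j : ℕ) + 1 : ℤ) - 2 * ((i : ℕ) + 1) + n + 1).toNat.factorial : ℚ))⁻¹
        else 0)
      = (((2*(n - 1 - (i:ℕ)) + 1).factorial : ℚ))⁻¹ * (Q j).eval (v i) := by
    intro i j
    have hkey := key_fact ((n:ℤ) - 2*(i:ℕ) - 1) ((j:ℕ)+1) n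
      (by have := j.isLt; omega) (by have := i.isLt; push_cast; omega)
    push_cast at hkey
    have heval : (Q j).eval (v i) =
        ∏ m ∈ Finset.Icc ((j:ℕ)+1+1) n, ((((n:ℤ) - 2*(i:ℕ) - 1 : ℤ) : ℚ) + m) := by
      rw [hQ]; simp [eval_prod, hv]
    have htonat1 : (((n:ℤ) - 2*(i:ℕ) - 1) + n).toNat = 2*(n - 1 - (i:ℕ)) + 1 := by
      have := i.isLt; omega
    have heq : ((j : ℕ) + 1 : ℤ) - 2 * ((i : ℕ) + 1) + n + 1
        = ((n:ℤ) - 2*(i:ℕ) - 1) + ((j:ℕ)+1) := by push_cast; ring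
    rw [heq, ← hkey, htonat1, heval]
    congr 1
    refine Finset.prod_congr rfl fun x _ => ?_
    push_cast
    ring
  have hmat : (Matrix.of fun i j : Fin n =>
      if (0:ℤ) ≤ ((j : ℕ) + 1 : ℤ) - 2 * ((i : ℕ) + 1) + n + 1
        then (((((j : ℕ) + 1 : ℤ) - 2 * ((i : ℕ) + 1) + n + 1).toNat.factorial : ℚ))⁻¹
        else 0)
      = Matrix.of (fun i j : Fin n => (((2*(n - 1 - (i:ℕ)) + 1).factorial : ℚ))⁻¹ *
          (Matrix.of fun i j : Fin n => (Q j).eval (v i)) i j) := by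
    ext i j
    simpa using hentry i j
  rw [hmat, Matrix.det_mul_column]
  -- now compute det of the polynomial evaluation matrix
  set w : Fin n → ℚ := fun i => v (Fin.rev i) with hw
  have hsub : (Matrix.of fun i j : Fin n => (Q j).eval (v i))
      = (Matrix.of fun i j : Fin n => (Q (Fin.rev j)).eval (w i)).submatrix
          Fin.revPerm Fin.revPerm := by
    ext i j
    simp [hw, Fin.rev_rev]
  have hdegrev : ∀ j : Fin n, (Q (Fin.rev j)).natDegree = (j:ℕ) := by
    intro j
    rw [hQdeg]
    have := j.isLt
    simp [Fin.val_rev]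
    omega
  have hdet2 : (Matrix.of fun i j : Fin n => (Q j).eval (v i)).det
      = (Matrix.vandermonde w).det := by
    rw [hsub, Matrix.det_submatrix_equiv_self,
      ← Matrix.det_eval_matrixOfPolynomials_eq_det_vandermonde w (fun j => Q (Fin.rev j))
        hdegrev (fun j => hQmonic _)]
  rw [hdet2, Matrix.det_vandermonde]
  have hwval : ∀ k : Fin n, w k = 2*(k:ℚ) - n + 1 := by
    intro k
    have hk := k.isLt
    have hcast : ((n - ((k:ℕ)+1) : ℕ) : ℤ) = (n:ℤ) - (k:ℕ) - 1 := by omega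
    simp only [hw, hv, Fin.val_rev]
    rw [hcast]
    push_cast
    ring
  have hinner : ∀ i : Fin n, ∏ j ∈ Finset.Ioi i, (w j - w i)
      = (2:ℚ)^(n - 1 - (i:ℕ)) * ((n - 1 - (i:ℕ)).factorial : ℚ) := by
    intro i
    have hi := i.isLt
    have h1 : ∏ j ∈ Finset.Ioi i, (w j - w i)
        = ∏ m ∈ Finset.Ioc (i:ℕ) (n-1), ((2:ℚ)*(m:ℚ) - 2*(i:ℚ)) := by
      rw [show Finset.Ioc (i:ℕ) (n-1) = Finset.Ioo (i:ℕ) n by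
        ext m; simp only [Finset.mem_Ioc, Finset.mem_Ioo]; omega]
      rw [← Fin.map_valEmbedding_Ioi, Finset.prod_map]
      refine Finset.prod_congr rfl fun j _ => ?_
      rw [hwval j, hwval i]
      simp [Fin.valEmbedding]
    have h2 : Finset.Ioc (i:ℕ) (n-1) = Finset.Ico ((i:ℕ)+1) n := by
      ext m; simp only [Finset.mem_Ioc, Finset.mem_Ico]; omega
    rw [h1, h2, Finset.prod_Ico_eq_prod_range]
    have h3 : ∀ t ∈ Finset.range (n - ((i:ℕ)+1)),
        ((2:ℚ)*((((i:ℕ)+1+t : ℕ)):ℚ) - 2*(i:ℚ)) = (2:ℚ) * ((t:ℚ)+1) := by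
      intro t _
      push_cast
      ring
    rw [Finset.prod_congr rfl h3, prod_two_mul_succ]
    have : n - ((i:ℕ)+1) = n - 1 - (i:ℕ) := by omega
    rw [this]
  rw [Finset.prod_congr rfl fun i _ => hinner i]
  rw [← Finset.prod_mul_distrib]
  have hfin : ∀ (f : ℕ → ℚ), ∏ i : Fin n, f (n - 1 - (i:ℕ)) = ∏ k ∈ Finset.range n, f k := by
    intro f
    rw [Fin.prod_univ_eq_prod_range (fun i => f (n - 1 - i)) n, Finset.prod_range_reflect]
  have := hfin (fun k => (((2*k+1).factorial : ℚ))⁻¹ * ((2:ℚ)^k * (k.factorial : ℚ)))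
  simp only [← mul_assoc] at this ⊢
  rw [show (∏ i : Fin n, ((((2*(n - 1 - (i:ℕ))+1).factorial : ℚ))⁻¹ *
      (2:ℚ)^(n - 1 - (i:ℕ)) * ((n - 1 - (i:ℕ)).factorial : ℚ)))
      = ∏ k ∈ Finset.range n, ((((2*k+1).factorial : ℚ))⁻¹ * (2:ℚ)^k * (k.factorial : ℚ))
    from this]
  rw [← Finset.prod_inv_distrib]
  refine Finset.prod_congr rfl fun k _ => ?_
  rw [mul_assoc]
  exact dfac_inv k

theorem tau_degree_leadingCoeff (h : ℕ → Polynomial ℚ)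
    (hgen : PowerSeries.mk h =
      (PowerSeries.mk fun n => Polynomial.C ((1 : ℚ) / n.factorial) * Polynomial.X ^ n) *
      (PowerSeries.mk fun n =>
        if n % 3 = 0 then Polynomial.C ((1 : ℚ) / (3 ^ (n / 3) * (n / 3).factorial)) else 0))
    (n : ℕ) (τ : Polynomial ℚ)
    (hτ : τ = Matrix.det (Matrix.of fun i j : Fin n =>
      if h0 : (0 : ℤ) ≤ ((j : ℕ) + 1 : ℤ) - 2 * ((i : ℕ) + 1) + n + 1
        then h ((((j : ℕ) + 1 : ℤ) - 2 * ((i : ℕ) + 1) + n + 1).toNat)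
        else 0)) :
    τ.natDegree = n * (n + 1) / 2 ∧
      τ.leadingCoeff = ((∏ k ∈ Finset.range n, (Nat.doubleFactorial (2 * k + 1) : ℚ)))⁻¹ := by
  -- explicit formula for h k
  have hform : ∀ k, h k = ∑ p ∈ Finset.HasAntidiagonal.antidiagonal k,
      (Polynomial.C ((1:ℚ)/p.1.factorial) * Polynomial.X ^ p.1) *
      (if p.2 % 3 = 0 then Polynomial.C ((1:ℚ)/(3^(p.2/3) * (p.2/3).factorial)) else 0) := by
    intro k
    have hc := congrArg (PowerSeries.coeff (R := Polynomial ℚ) k) hgen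
    rw [PowerSeries.coeff_mk, PowerSeries.coeff_mul] at hc
    simp only [PowerSeries.coeff_mk] at hc
    exact hc
  have hdeg : ∀ k, (h k).natDegree ≤ k := by
    intro k
    rw [hform k]
    refine Polynomial.natDegree_sum_le_of_forall_le _ _ fun p hp => ?_
    have hp1 : p.1 ≤ k := by have := Finset.HasAntidiagonal.mem_antidiagonal.mp hp; omega
    refine Polynomial.natDegree_mul_le.trans ?_
    have h1 : (Polynomial.C ((1:ℚ)/p.1.factorial) * Polynomial.X ^ p.1).natDegree ≤ p.1 :=
      Polynomial.natDegree_C_mul_X_pow_le _ _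
    have h2 : (if p.2 % 3 = 0 then
        Polynomial.C ((1:ℚ)/(3^(p.2/3) * (p.2/3).factorial)) else 0).natDegree = 0 := by
      split_ifs
      exacts [Polynomial.natDegree_C _, Polynomial.natDegree_zero]
    omega
  have hcoeff : ∀ k, (h k).coeff k = ((k.factorial : ℚ))⁻¹ := by
    intro k
    rw [hform k, Polynomial.finset_sum_coeff]
    rw [Finset.sum_eq_single (k, 0)]
    · norm_num [Polynomial.coeff_C_mul, Polynomial.coeff_X_pow, one_div]
    · intro p hp hne
      have hpk : p.1 + p.2 = k := Finset.HasAntidiagonal.mem_antidiagonal.mp hp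
      have hlt : p.1 < k := by
        rcases Nat.lt_or_ge p.1 k with hl | hl
        · exact hl
        · exfalso
          apply hne
          have h1 : p.1 = k := by omega
          have h2 : p.2 = 0 := by omega
          exact Prod.ext h1 h2
      apply Polynomial.coeff_eq_zero_of_natDegree_lt
      refine lt_of_le_of_lt ?_ hlt
      refine Polynomial.natDegree_mul_le.trans ?_
      have h1 : (Polynomial.C ((1:ℚ)/p.1.factorial) * Polynomial.X ^ p.1).natDegree ≤ p.1 :=
        Polynomial.natDegree_C_mul_X_pow_le _ _
      have h2 : (if p.2 % 3 = 0 then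
          Polynomial.C ((1:ℚ)/(3^(p.2/3) * (p.2/3).factorial)) else 0).natDegree = 0 := by
        split_ifs
        exacts [Polynomial.natDegree_C _, Polynomial.natDegree_zero]
      omega
    · intro hk
      exact absurd (Finset.HasAntidiagonal.mem_antidiagonal.mpr (by simp)) hk
  -- setup
  set T := n * (n + 1) / 2 with hT
  have h2T : T * 2 = n * (n + 1) := Nat.div_mul_cancel (Nat.even_mul_succ_self n).two_dvd
  set a : Fin n → Fin n → ℤ :=
    fun i j => ((j : ℕ) + 1 : ℤ) - 2 * ((i : ℕ) + 1) + n + 1 with ha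
  have hTfin : ∑ i : Fin n, (((i:ℕ) : ℤ) + 1) = (T : ℤ) := by
    have h1 := Finset.sum_range_id (n+1)
    have h2 := Finset.sum_range_succ' (fun i => i) n
    simp only [add_zero] at h2
    have h4 : (n+1)*(n+1-1) = n*(n+1) := by rw [Nat.add_sub_cancel]; ring
    have h3 : ∑ i ∈ Finset.range n, (i+1) = T := by omega
    rw [Fin.sum_univ_eq_sum_range (fun i => ((i : ℤ) + 1)) n]
    have : ∑ i ∈ Finset.range n, ((i : ℤ) + 1) = ((∑ i ∈ Finset.range n, (i+1) : ℕ) : ℤ) := by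
      push_cast; rfl
    rw [this, h3]
  have hMa : ∀ (σ : Equiv.Perm (Fin n)), (∀ i, 0 ≤ a (σ i) i) →
      ∑ i : Fin n, (a (σ i) i).toNat = T := by
    intro σ hpos
    have hperm : ∑ i : Fin n, (((σ i : ℕ) : ℤ) + 1) = ∑ i : Fin n, (((i:ℕ) : ℤ) + 1) :=
      Equiv.sum_comp σ (fun i => ((i:ℕ) : ℤ) + 1)
    have hsum : ∑ i : Fin n, a (σ i) i = (T : ℤ) := by
      calc ∑ i : Fin n, a (σ i) i
          = ∑ i : Fin n, ((((i:ℕ) : ℤ) + 1) - 2 * (((σ i : ℕ) : ℤ) + 1) + ((n:ℤ) + 1)) :=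
            Finset.sum_congr rfl fun i _ => by simp only [ha]; push_cast; ring
        _ = (∑ i : Fin n, (((i:ℕ) : ℤ) + 1)) - 2 * (∑ i : Fin n, (((σ i : ℕ) : ℤ) + 1))
            + n * ((n:ℤ) + 1) := by
            rw [Finset.sum_add_distrib, Finset.sum_sub_distrib, ← Finset.mul_sum,
              Finset.sum_const, Finset.card_univ, Fintype.card_fin, nsmul_eq_mul]
        _ = (T : ℤ) := by
            rw [hperm, hTfin]
            have : ((T * 2 : ℕ) : ℤ) = ((n * (n+1) : ℕ) : ℤ) := by exact_mod_cast h2T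
            push_cast at this
            linarith
    have hcast : ((∑ i : Fin n, (a (σ i) i).toNat : ℕ) : ℤ) = (T : ℤ) := by
      push_cast
      rw [Finset.sum_congr rfl fun i _ => Int.toNat_of_nonneg (hpos i)]
      exact hsum
    exact_mod_cast hcast
  set Cm : Matrix (Fin n) (Fin n) ℚ := Matrix.of fun i j : Fin n =>
    if (0:ℤ) ≤ a i j then (((a i j).toNat.factorial : ℚ))⁻¹ else 0 with hCm
  have hcoeffT : τ.coeff T = Cm.det := by
    rw [hτ, Matrix.det_apply', Matrix.det_apply', Polynomial.finset_sum_coeff]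
    refine Finset.sum_congr rfl fun σ _ => ?_
    rw [← Polynomial.C_eq_intCast, Polynomial.coeff_C_mul]
    congr 1
    by_cases hall : ∀ i, 0 ≤ a (σ i) i
    · have hdi := hMa σ hall
      have hMentry : ∀ i : Fin n,
          (Matrix.of fun i j : Fin n =>
            if h0 : (0 : ℤ) ≤ ((j : ℕ) + 1 : ℤ) - 2 * ((i : ℕ) + 1) + n + 1
              then h ((((j : ℕ) + 1 : ℤ) - 2 * ((i : ℕ) + 1) + n + 1).toNat)
              else 0) (σ i) i = h ((a (σ i) i).toNat) := fun i => dif_pos (hall i)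
      rw [Finset.prod_congr rfl fun i _ => hMentry i, ← hdi,
        coeff_prod_deg Finset.univ _ _ (fun i _ => hdeg _)]
      refine Finset.prod_congr rfl fun i _ => ?_
      rw [hcoeff]
      exact (if_pos (hall i)).symm
    · push_neg at hall
      obtain ⟨i0, hi0⟩ := hall
      rw [Finset.prod_eq_zero (Finset.mem_univ i0) (dif_neg (not_le.mpr hi0)),
        Polynomial.coeff_zero]
      exact (Finset.prod_eq_zero (f := fun i => Cm (σ i) i) (Finset.mem_univ i0)
          (if_neg (not_le.mpr hi0))).symm
  have hdegτ : τ.natDegree ≤ T := by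
    rw [hτ, Matrix.det_apply']
    refine Polynomial.natDegree_sum_le_of_forall_le _ _ fun σ _ => ?_
    rw [← Polynomial.C_eq_intCast]
    refine (Polynomial.natDegree_C_mul_le _ _).trans ?_
    by_cases hall : ∀ i, 0 ≤ a (σ i) i
    · refine (Polynomial.natDegree_prod_le _ _).trans ?_
      rw [← hMa σ hall]
      refine Finset.sum_le_sum fun i _ => ?_
      have : (Matrix.of fun i j : Fin n =>
            if h0 : (0 : ℤ) ≤ ((j : ℕ) + 1 : ℤ) - 2 * ((i : ℕ) + 1) + n + 1
              then h ((((j : ℕ) + 1 : ℤ) - 2 * ((i : ℕ) + 1) + n + 1).toNat)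
              else 0) (σ i) i = h ((a (σ i) i).toNat) := dif_pos (hall i)
      rw [this]
      exact hdeg _
    · push_neg at hall
      obtain ⟨i0, hi0⟩ := hall
      rw [Finset.prod_eq_zero (Finset.mem_univ i0) (dif_neg (not_le.mpr hi0))]
      simp
  have hCdet : Cm.det = (∏ k ∈ Finset.range n, (((2*k+1).doubleFactorial : ℕ) : ℚ))⁻¹ := by
    rw [hCm]
    simp only [ha]
    exact detC n
  have hprodpos : (0:ℚ) < ∏ k ∈ Finset.range n, (((2*k+1).doubleFactorial : ℕ) : ℚ) :=
    Finset.prod_pos fun k _ => by exact_mod_cast Nat.doubleFactorial_pos _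
  have hne : τ.coeff T ≠ 0 := by
    rw [hcoeffT, hCdet]
    exact inv_ne_zero hprodpos.ne'
  have hdegeq : τ.natDegree = T := le_antisymm hdegτ (Polynomial.le_natDegree_of_ne_zero hne)
  refine ⟨hdegeq, ?_⟩
  rw [Polynomial.leadingCoeff, hdegeq, hcoeffT, hCdet]
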